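/- Let n = s·L + L₀ with 0 ≤ L₀ ≤ s−1 and L ≥ 1 (so L = ⌊n/s⌋), and let j = L mod k. Then, as rational numbers, c_n = (L² + (k+2)·L + 2k)/(2k) + ((k−2)·j − j²)/(2k). -/

import Mathlib

/-- Exact formula for the number of ways to make change of `n = s*L + L₀` cents
using the coin set `{1, s, k*s}` (pennies, `s`-cent coins and `ks`-cent coins),
where `L ≥ 1`, `0 ≤ L₀ ≤ s - 1` and `j = L mod k`. -/
theorem change_three_coins_formula (s k : ℕ) (hs : 2 ≤ s) (hk : 2 ≤ k)
    (n L L₀ : ℕ) (hL : 1 ≤ L) (hL₀ : L₀ ≤ s - 1) (hn : n = s * L + L₀)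
    (j : ℕ) (hj : j = L % k) :
    (Nat.card {p : ℕ × ℕ × ℕ // p.1 + s * p.2.1 + k * s * p.2.2 = n} : ℚ)
      = ((L : ℚ) ^ 2 + ((k : ℚ) + 2) * (L : ℚ) + 2 * (k : ℚ)) / (2 * (k : ℚ))
        + (((k : ℚ) - 2) * (j : ℚ) - (j : ℚ) ^ 2) / (2 * (k : ℚ)) := by
  have hs0 : 0 < s := by omega
  set q := L / k with hq
  have hqj : k * q + j = L := by rw [hj, hq]; exact Nat.div_add_mod L k
  -- key bound
  have key : ∀ b c : ℕ, s * b + k * s * c ≤ n ↔ b + k * c ≤ L := by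
    intro b c
    have h2 : s * b + k * s * c = s * (b + k * c) := by ring
    constructor
    · intro h
      have hns : n < s * (L + 1) := by
        rw [hn]
        have hL₀s : L₀ < s := by omega
        nlinarith
      have h1 : s * (b + k * c) < s * (L + 1) := by omega
      exact Nat.lt_succ_iff.mp (Nat.lt_of_mul_lt_mul_left h1)
    · intro h
      rw [h2, hn]
      calc s * (b + k * c) ≤ s * L := Nat.mul_le_mul_left s h
        _ ≤ s * L + L₀ := Nat.le_add_right _ _
  -- count as a sum
  have hcard : Nat.card {p : ℕ × ℕ × ℕ // p.1 + s * p.2.1 + k * s * p.2.2 = n}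
      = ∑ c ∈ Finset.range (L + 1), (L + 1 - k * c) := by
    have : ∑ c ∈ Finset.range (L + 1), (L + 1 - k * c)
        = ((Finset.range (L + 1)).sigma fun c => Finset.range (L + 1 - k * c)).card := by
      rw [Finset.card_sigma]
      simp
    rw [this, ← Nat.card_eq_finsetCard]
    apply Nat.card_congr
    refine ⟨fun p => ⟨⟨p.1.2.2, p.1.2.1⟩, ?_⟩,
      fun x => ⟨(n - s * x.1.2 - k * s * x.1.1, x.1.2, x.1.1), ?_⟩, ?_, ?_⟩
    · obtain ⟨⟨a, b, c⟩, h⟩ := p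
      dsimp only at h ⊢
      simp only [Finset.mem_sigma, Finset.mem_range]
      have hbc : b + k * c ≤ L := (key b c).mp (by omega)
      have hc : c ≤ k * c := Nat.le_mul_of_pos_left c (by omega)
      omega
    · obtain ⟨⟨c, b⟩, h⟩ := x
      simp only [Finset.mem_sigma, Finset.mem_range] at h
      have hbc : b + k * c ≤ L := by omega
      have hle : s * b + k * s * c ≤ n := (key b c).mpr hbc
      dsimp only
      omega
    · rintro ⟨⟨a, b, c⟩, h⟩
      dsimp only at h
      have : n - s * b - k * s * c = a := by omega
      simp [this]
    · rintro ⟨⟨c, b⟩, h⟩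
      simp
  rw [hcard]
  -- drop zero terms
  have hsum : ∑ c ∈ Finset.range (L + 1), (L + 1 - k * c)
      = ∑ c ∈ Finset.range (q + 1), (L + 1 - k * c) := by
    have hq1 : q + 1 ≤ L + 1 := by
      have := Nat.le_mul_of_pos_left q (show 0 < k by omega)
      omega
    rw [← Finset.sum_range_add_sum_Ico _ hq1]
    have : ∑ c ∈ Finset.Ico (q + 1) (L + 1), (L + 1 - k * c) = 0 := by
      apply Finset.sum_eq_zero
      intro c hc
      simp only [Finset.mem_Ico] at hc
      have : k * (q + 1) ≤ k * c := Nat.mul_le_mul_left k hc.1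
      have hkq : k * (q + 1) = k * q + k := by ring
      have : L < k * (q + 1) := by
        rw [hj] at hqj
        have := Nat.mod_lt L (show 0 < k by omega)
        omega
      omega
    omega
  rw [hsum]
  -- cast to ℚ
  have hterm : ∀ c ∈ Finset.range (q + 1), ((L + 1 - k * c : ℕ) : ℚ)
      = (L : ℚ) + 1 - (k : ℚ) * c := by
    intro c hc
    simp only [Finset.mem_range] at hc
    have h1 : k * c ≤ L := by
      calc k * c ≤ k * q := Nat.mul_le_mul_left k (by omega)
        _ ≤ L := by omega
    push_cast [Nat.cast_sub (by omega : k * c ≤ L + 1)]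
    ring
  push_cast
  rw [Finset.sum_congr rfl hterm]
  rw [Finset.sum_sub_distrib, Finset.sum_const, Finset.card_range, ← Finset.mul_sum]
  have hgauss : ∀ m : ℕ, ∑ c ∈ Finset.range (m + 1), (c : ℚ) = m * (m + 1) / 2 := by
    intro m
    induction m with
    | zero => simp
    | succ m ih => rw [Finset.sum_range_succ, ih]; push_cast; ring
  rw [hgauss q]
  have hk0 : (k : ℚ) ≠ 0 := by positivity
  have hLq : (L : ℚ) = (k : ℚ) * q + j := by
    rw [← hqj]; push_cast; ring
  rw [hLq]
  field_simp
  ring
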